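/- Proposition 3 (impossibility of representation-window-based decision rules): consider the family of branch MDPs indexed by β ∈ {true, false}, where in instance β the terminal reward 1 is earned at the end of the u-branch (action L) if β = true and at the end of the v-branch (action R) if β = false, with all transitions and other rewards unchanged. For any representation φ satisfying the aliasing condition φ(u_t) = φ(v_t) for all t = 1,…,H, the observable represented window data is identical in both instances and under both initial actions. Therefore, for every decision rule D mapping such window data to an action in {L, R}, there exists β ∈ {true, false} such that in instance β the action selected by D achieves full-horizon return 0 while the other action achieves return 1. -/
import Mathlib


/-!
Proposition 3 (impossibility of representation-window-based decision rules):
a family of branch MDPs indexed by `β : Bool`, where the terminal reward `1` is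
earned at the end of the `u`-branch (action `L`) if `β = true` and at the end of
the `v`-branch (action `R`) if `β = false`.  Actions are encoded by `Bool`
(`true ↦ L`, `false ↦ R`).
-/

/-- States of the branch MDP. -/
inductive BState : Type where
  | s0 : BState
  | u : ℕ → BState
  | v : ℕ → BState
  | g : BState
  | b : BState
deriving DecidableEq

/-- Trajectory induced by an initial action `a : Bool` (`true ↦ L`); it does not
depend on the instance `β`. -/
def traj (H : ℕ) (a : Bool) (t : ℕ) : BState :=
  if t = 0 then .s0
  else if t ≤ H + 1 then (if a then .u t else .v t)
  else (if a then .g else .b)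

/-- Reward at step `t` in instance `β` under initial action `a`: the final
transition (step `H+1`) carries reward `1` exactly when it enters the rewarded
terminal, i.e. when `a = β`; all other rewards are `0`. -/
def rew (H : ℕ) (β a : Bool) (t : ℕ) : ℝ :=
  if t = H + 1 ∧ a = β then 1 else 0

/-- Full-horizon return in instance `β` under initial action `a`. -/
def ret (H : ℕ) (β a : Bool) : ℝ := ∑ t ∈ Finset.range (H + 2), rew H β a t

/-- The observable represented window data of a trajectory under representation
`φ`: the block starting at time `t` (observable iff `1 ≤ t` and `t + H − 1 ≤ H`)
with entries `φ(τ(t+j))` for `j < H`; all observable windows lie within times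
`1, …, H`. -/
def obs (H : ℕ) {X : Type*} (φ : BState → X) (τ : ℕ → BState) :
    ℕ → ℕ → Option X :=
  fun t j => if 1 ≤ t ∧ t + H - 1 ≤ H ∧ j < H then some (φ (τ (t + j))) else none

/-- **Proposition 3, impossibility form.** For any representation
`φ` satisfying the aliasing condition `φ(u_t) = φ(v_t)` for `t = 1,…,H`, the
observable represented window data is identical in both instances and under both
initial actions.  Therefore, for every decision rule `D` mapping such window data
to an action, there exists an instance `β` in which the action selected by `D`
achieves full-horizon return `0` while the other action achieves return `1`. -/
theorem branch_decision_rule_impossibility (H : ℕ) (hH : 1 ≤ H)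
    {X : Type*} (φ : BState → X)
    (halias : ∀ t, 1 ≤ t → t ≤ H → φ (.u t) = φ (.v t)) :
    (∀ a a' : Bool, obs H φ (traj H a) = obs H φ (traj H a')) ∧
    (∀ D : (ℕ → ℕ → Option X) → Bool, ∃ β : Bool,
      ret H β (D (obs H φ (traj H true))) = 0 ∧
      ret H β (!(D (obs H φ (traj H true)))) = 1) := by

  have hobs : ∀ a a' : Bool, obs H φ (traj H a) = obs H φ (traj H a') := by
    have key : ∀ a : Bool, ∀ t j : ℕ, 1 ≤ t → t + H - 1 ≤ H → j < H →
        φ (traj H a (t + j)) = φ (traj H true (t + j)) := by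
      intro a t j ht htH hj
      have h1 : 1 ≤ t + j := le_trans ht (Nat.le_add_right _ _)
      have h2 : t + j ≤ H := by omega
      have h3 : t + j ≤ H + 1 := by omega
      have h4 : t + j ≠ 0 := by omega
      simp only [traj, if_neg h4, if_pos h3]
      cases a <;> simp [halias _ h1 h2]
    intro a a'
    funext t j
    simp only [obs]
    split
    · next h => rw [key a t j h.1 h.2.1 h.2.2, key a' t j h.1 h.2.1 h.2.2]
    · rfl
  refine ⟨hobs, fun D => ?_⟩
  set c := D (obs H φ (traj H true)) with hc
  have hret : ∀ β a : Bool, ret H β a = if a = β then 1 else 0 := by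
    intro β a
    unfold ret
    rw [Finset.sum_eq_single (H + 1)]
    · unfold rew; by_cases h : a = β <;> simp [h]
    · intro b hb hne; unfold rew; simp [hne]
    · intro h; exact absurd (Finset.self_mem_range_succ (H+1)) (by simpa using h)
  refine ⟨!c, ?_, ?_⟩
  · rw [hret]; cases c <;> simp
  · rw [hret]; simp
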